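/- Let G be a transitive permutation group on a finite set Ω and let Δ ⊆ Σ be G-blocks. Then the quotient G^Σ/G^Δ embeds into a finite direct power of G_Σ/G(Σ/Δ), where G^Δ = G(Ω/Δ) and G^Σ = G(Ω/Σ) are the kernels of the actions of G on the respective block systems of Ω. -/
import Mathlib


open Pointwise

namespace GaloisBlocks

variable {Ω : Type*}

/-- `G ≤ Sym(Ω)` is transitive on `Ω`. -/
def IsTransitive (G : Subgroup (Equiv.Perm Ω)) : Prop :=
  ∀ a b : Ω, ∃ g ∈ G, g a = b

/-- `Δ` is a `G`-block: every `G`-translate of `Δ` equals `Δ` or is disjoint from it. -/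
def IsBlock (G : Subgroup (Equiv.Perm Ω)) (Δ : Set Ω) : Prop :=
  ∀ g ∈ G, g • Δ = Δ ∨ Disjoint (g • Δ) Δ

/-- The setwise stabilizer `G_Δ` of `Δ` in `G`. -/
def stab (G : Subgroup (Equiv.Perm Ω)) (Δ : Set Ω) : Subgroup (Equiv.Perm Ω) :=
  G ⊓ MulAction.stabilizer (Equiv.Perm Ω) Δ

/-- The point stabilizer `G_α`. -/
def stabPt (G : Subgroup (Equiv.Perm Ω)) (α : Ω) : Subgroup (Equiv.Perm Ω) :=
  G ⊓ MulAction.stabilizer (Equiv.Perm Ω) α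

/-- The `Δ`-block system of `S`: all `G`-translates of `Δ` contained in `S`. -/
def blockSystem (G : Subgroup (Equiv.Perm Ω)) (S Δ : Set Ω) : Set (Set Ω) :=
  {Υ | (∃ g ∈ G, Υ = g • Δ) ∧ Υ ⊆ S}

/-- `G(S/Δ)`: elements of `G_S` fixing setwise every block of the `Δ`-block
system of `S`. -/
def blockKer (G : Subgroup (Equiv.Perm Ω)) (S Δ : Set Ω) : Subgroup (Equiv.Perm Ω) :=
  stab G S ⊓ ⨅ Υ ∈ blockSystem G S Δ, MulAction.stabilizer (Equiv.Perm Ω) Υ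

/-- `G^Δ = G(Ω/Δ)`: the kernel of the action of `G` on the block system of `Δ`. -/
def fullKer (G : Subgroup (Equiv.Perm Ω)) (Δ : Set Ω) : Subgroup (Equiv.Perm Ω) :=
  blockKer G Set.univ Δ

/-- The orbit `α^N`. -/
def orbitOf (N : Subgroup (Equiv.Perm Ω)) (α : Ω) : Set Ω :=
  {β | ∃ g ∈ N, g α = β}

/-- `G` is primitive: transitive with only trivial blocks. -/
def IsPrimitive (G : Subgroup (Equiv.Perm Ω)) : Prop :=
  IsTransitive G ∧ ∀ Δ : Set Ω, IsBlock G Δ → Δ.Subsingleton ∨ Δ = Set.univ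

/-- `Δ` is a maximal `G`-subblock of `S`. -/
def IsMaximalSubblock (G : Subgroup (Equiv.Perm Ω)) (Δ S : Set Ω) : Prop :=
  IsBlock G Δ ∧ IsBlock G S ∧ Δ ⊂ S ∧
    ∀ Υ : Set Ω, IsBlock G Υ → ¬(Δ ⊂ Υ ∧ Υ ⊂ S)

/-- `P` is a `p`-Sylow subgroup of `G`. -/
def IsSylowOf (p : ℕ) (P G : Subgroup (Equiv.Perm Ω)) : Prop :=
  P ≤ G ∧ IsPGroup p ↥P ∧
    ∀ Q : Subgroup (Equiv.Perm Ω), Q ≤ G → IsPGroup p ↥Q → P ≤ Q → Q = P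

lemma mem_fullKer_iff (G : Subgroup (Equiv.Perm Ω)) (S : Set Ω) (x : Equiv.Perm Ω) :
    x ∈ fullKer G S ↔ x ∈ G ∧ ∀ g ∈ G, x • (g • S) = g • S := by
  simp only [fullKer, blockKer, stab, blockSystem, Subgroup.mem_inf, Subgroup.mem_iInf,
    MulAction.mem_stabilizer_iff, Set.mem_setOf_eq]
  constructor
  · rintro ⟨⟨hG, -⟩, h⟩
    exact ⟨hG, fun g hg => h (g • S) ⟨⟨g, hg, rfl⟩, Set.subset_univ _⟩⟩
  · rintro ⟨hG, h⟩
    refine ⟨⟨hG, Set.smul_set_univ⟩, ?_⟩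
    rintro Υ ⟨⟨g, hg, rfl⟩, -⟩
    exact h g hg

lemma mem_blockKer_iff (G : Subgroup (Equiv.Perm Ω)) (S Δ : Set Ω) (x : Equiv.Perm Ω) :
    x ∈ blockKer G S Δ ↔ (x ∈ G ∧ x • S = S) ∧
      ∀ g ∈ G, g • Δ ⊆ S → x • (g • Δ) = g • Δ := by
  simp only [blockKer, stab, blockSystem, Subgroup.mem_inf, Subgroup.mem_iInf,
    MulAction.mem_stabilizer_iff, Set.mem_setOf_eq]
  constructor
  · rintro ⟨hs, h⟩
    exact ⟨hs, fun g hg hss => h (g • Δ) ⟨⟨g, hg, rfl⟩, hss⟩⟩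
  · rintro ⟨hs, h⟩
    refine ⟨hs, ?_⟩
    rintro Υ ⟨⟨g, hg, rfl⟩, hss⟩
    exact h g hg hss

/-- `G^S/G^Δ` embeds into a finite direct power of `G_S/G(S/Δ)`. -/
theorem stmt15 [Fintype Ω] (G : Subgroup (Equiv.Perm Ω)) (hG : IsTransitive G)
    (Δ S : Set Ω) (hΔ : IsBlock G Δ) (hS : IsBlock G S) (hsub : Δ ⊆ S)
    [hN : ((blockKer G S Δ).subgroupOf (stab G S)).Normal] :
    ∃ (l : ℕ)
      (φ : ↥(fullKer G S) →*
        (Fin l → ↥(stab G S) ⧸ (blockKer G S Δ).subgroupOf (stab G S))),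
      φ.ker = (fullKer G Δ).subgroupOf (fullKer G S) := by
  classical
  have : Fintype ↥G := Fintype.ofFinite _
  set l := Fintype.card ↥G with hl
  set e : Fin l ≃ ↥G := (Fintype.equivFin ↥G).symm with he
  -- the conjugated element lies in `stab G S`
  have hconj : ∀ (x : ↥(fullKer G S)) (g : ↥G),
      (g : Equiv.Perm Ω)⁻¹ * (x : Equiv.Perm Ω) * g ∈ stab G S := by
    intro x g
    obtain ⟨hxG, hxS⟩ := (mem_fullKer_iff G S _).mp x.2
    refine Subgroup.mem_inf.mpr ⟨mul_mem (mul_mem (inv_mem g.2) hxG) g.2, ?_⟩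
    rw [MulAction.mem_stabilizer_iff, mul_smul, mul_smul, hxS g g.2, inv_smul_smul]
  let c : ↥G → (↥(fullKer G S) →* ↥(stab G S)) := fun g =>
    { toFun := fun x => ⟨(g : Equiv.Perm Ω)⁻¹ * (x : Equiv.Perm Ω) * g, hconj x g⟩
      map_one' := by ext; simp
      map_mul' := fun x y => by ext; simp [mul_assoc] }
  let φ : ↥(fullKer G S) →*
      (Fin l → ↥(stab G S) ⧸ (blockKer G S Δ).subgroupOf (stab G S)) :=
    Pi.monoidHom fun i =>
      (QuotientGroup.mk' ((blockKer G S Δ).subgroupOf (stab G S))).comp (c (e i))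
  have hone : ∀ (a : ↥(stab G S)),
      QuotientGroup.mk' ((blockKer G S Δ).subgroupOf (stab G S)) a = 1 ↔
        (a : Equiv.Perm Ω) ∈ blockKer G S Δ := fun a => by
    rw [QuotientGroup.mk'_apply, QuotientGroup.eq_one_iff, Subgroup.mem_subgroupOf]
  refine ⟨l, φ, ?_⟩
  ext x
  have hφ : ∀ i : Fin l, φ x i =
      QuotientGroup.mk' ((blockKer G S Δ).subgroupOf (stab G S)) (c (e i) x) :=
    fun i => rfl
  constructor
  · intro hx
    have hx' : ∀ i : Fin l,
        (e i : Equiv.Perm Ω)⁻¹ * (x : Equiv.Perm Ω) * e i ∈ blockKer G S Δ := by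
      intro i
      have h1 := congrFun (MonoidHom.mem_ker.mp hx) i
      rw [hφ i, Pi.one_apply] at h1
      exact (hone _).mp h1
    rw [Subgroup.mem_subgroupOf, mem_fullKer_iff]
    obtain ⟨hxG, -⟩ := (mem_fullKer_iff G S _).mp x.2
    refine ⟨hxG, ?_⟩
    intro k hk
    have h := hx' (e.symm ⟨k, hk⟩)
    rw [Equiv.apply_symm_apply] at h
    have h2 := ((mem_blockKer_iff G S Δ _).mp h).2 1 (one_mem G)
      (by rwa [one_smul])
    rw [one_smul] at h2
    have h3 : (x : Equiv.Perm Ω) • (k • Δ) = k • ((k⁻¹ * (x : Equiv.Perm Ω) * k) • Δ) := by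
      rw [mul_smul, mul_smul, smul_inv_smul]
    rw [h3, h2]
  · intro hx
    have hxΔ := (mem_fullKer_iff G Δ _).mp (Subgroup.mem_subgroupOf.mp hx)
    rw [MonoidHom.mem_ker]
    funext i
    rw [hφ i, Pi.one_apply, hone]
    rw [mem_blockKer_iff]
    have hstab := Subgroup.mem_inf.mp (hconj x (e i))
    refine ⟨⟨hstab.1, MulAction.mem_stabilizer_iff.mp hstab.2⟩, ?_⟩
    intro h hh hhS
    set g : Equiv.Perm Ω := (e i : Equiv.Perm Ω)
    have hfix := hxΔ.2 (g * h) (mul_mem (e i).2 hh)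
    rw [mul_smul] at hfix
    show (g⁻¹ * (x : Equiv.Perm Ω) * g) • (h • Δ) = h • Δ
    rw [mul_smul, mul_smul, ← mul_smul g h Δ, mul_smul, hfix, inv_smul_smul]

end GaloisBlocks
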